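/- arXiv:2508.15567 — 2 statements merged into one kernel-verified Lean document; each statement's English description precedes it below -/
import Mathlib

section
/- For m = 1, 2, 3 let β_m, θ_m ∈ ℝᵖ, let W₁, W₂, W₃ : Ω → (real n×p matrices) be random matrices with E[W_m] = 0 that are mutually independent and independent of (ε₁, ε₂, ε₃), where ε₁, ε₂, ε₃ : Ω → ℝⁿ are square-integrable random vectors with E[ε_m] = 0 and E[ε_m ε_{m'}ᵀ] = Σ_{mm'}. Set y_m = X_m β_m + W_m θ_m + ε_m, y = y₁ + y₂, ŷ = H y, ŷ* = H₁ y₁ + H₂ y₂, ŷ₃ = H₃ y₃, and R := (y₃ − ŷ₃)ᵀ(ŷ* − ŷ). Then E[R] = Tr{(I − H₃)(H₁ − H)Σ₁₃} + Tr{(I − H₃)(H₂ − H)Σ₂₃}. -/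
open Matrix MeasureTheory ProbabilityTheory
open scoped BigOperators

/-- The hat matrix `H_A = A (AᵀA)⁻¹ Aᵀ` of a design matrix `A`. -/
noncomputable def hatMat {n : ℕ} {q : Type*} [Fintype q] [DecidableEq q]
    (A : Matrix (Fin n) q ℝ) : Matrix (Fin n) (Fin n) ℝ :=
  A * (Aᵀ * A)⁻¹ * Aᵀ

lemma hatMat_transpose {n : ℕ} {q : Type*} [Fintype q] [DecidableEq q]
    (A : Matrix (Fin n) q ℝ) : (hatMat A)ᵀ = hatMat A := by
  simp [hatMat, Matrix.transpose_mul, Matrix.transpose_nonsing_inv, Matrix.mul_assoc]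

lemma hatMat_mul_self {n : ℕ} {q : Type*} [Fintype q] [DecidableEq q]
    {A : Matrix (Fin n) q ℝ} (h : IsUnit (Aᵀ * A)) : hatMat A * A = A := by
  have hd : IsUnit (Aᵀ * A).det := (Matrix.isUnit_iff_isUnit_det _).mp h
  rw [hatMat, Matrix.mul_assoc, Matrix.mul_assoc, Matrix.nonsing_inv_mul _ hd, Matrix.mul_one]

lemma memL2_integrable_mul {Ω : Type*} [MeasurableSpace Ω] {P : Measure Ω}
    {f g : Ω → ℝ} (hf : MemLp f 2 P) (hg : MemLp g 2 P) :
    Integrable (fun ω => f ω * g ω) P := by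
  have h1 := hf.integrable_sq
  have h2 := hg.integrable_sq
  refine Integrable.mono' ((h1.add h2).div_const 2)
    (hf.aestronglyMeasurable.mul hg.aestronglyMeasurable) ?_
  filter_upwards with ω
  simp only [Real.norm_eq_abs, Pi.add_apply]
  rw [abs_mul]
  nlinarith [sq_nonneg (|f ω| - |g ω|), sq_abs (f ω), sq_abs (g ω), abs_nonneg (f ω),
    abs_nonneg (g ω)]

/-- **Lemma 2** (unconditional formula): with mean-zero, mutually independent random `W_m`
independent of the errors, `E[R] = Tr{(I−H₃)(H₁−H)Σ₁₃} + Tr{(I−H₃)(H₂−H)Σ₂₃}`. -/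
theorem expectation_R_random_W {n p : ℕ}
    {Ω : Type*} [MeasurableSpace Ω] (P : Measure Ω) [IsProbabilityMeasure P]
    (X : Fin 3 → Matrix (Fin n) (Fin p) ℝ)
    (hXm : ∀ m, IsUnit ((X m)ᵀ * X m))
    (hX : IsUnit ((fromCols (X 0) (X 1))ᵀ * fromCols (X 0) (X 1)))
    (β θ : Fin 3 → Fin p → ℝ)
    (W : Fin 3 → Ω → Fin n → Fin p → ℝ)
    (ε : Fin 3 → Ω → Fin n → ℝ)
    (Sig : Fin 3 → Fin 3 → Matrix (Fin n) (Fin n) ℝ)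
    (hWL2 : ∀ m i j, MemLp (fun ω => W m ω i j) 2 P)
    (hWmean : ∀ m i j, ∫ ω, W m ω i j ∂P = 0)
    (hWindep : iIndepFun W P)
    (hWε : IndepFun (fun ω => fun m => W m ω) (fun ω => fun m => ε m ω) P)
    (hεL2 : ∀ m i, MemLp (fun ω => ε m ω i) 2 P)
    (hεmean : ∀ m i, ∫ ω, ε m ω i ∂P = 0)
    (hcov : ∀ m m' i j, ∫ ω, ε m ω i * ε m' ω j ∂P = Sig m m' i j) :
    let y : Fin 3 → Ω → Fin n → ℝ :=
      fun m ω => (X m).mulVec (β m) + (Matrix.of (W m ω)).mulVec (θ m) + ε m ω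
    let H := hatMat (fromCols (X 0) (X 1))
    let H₁ := hatMat (X 0)
    let H₂ := hatMat (X 1)
    let H₃ := hatMat (X 2)
    (∫ ω, (y 2 ω - H₃.mulVec (y 2 ω)) ⬝ᵥ
        ((H₁.mulVec (y 0 ω) + H₂.mulVec (y 1 ω)) - H.mulVec (y 0 ω + y 1 ω)) ∂P)
      = Matrix.trace ((1 - H₃) * (H₁ - H) * Sig 0 2)
        + Matrix.trace ((1 - H₃) * (H₂ - H) * Sig 1 2) := by
  intro y H H₁ H₂ H₃
  classical
  have eH1 : H₁ = hatMat (X 0) := rfl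
  have eH2 : H₂ = hatMat (X 1) := rfl
  have eH3 : H₃ = hatMat (X 2) := rfl
  have eH : H = hatMat (fromCols (X 0) (X 1)) := rfl
  have ey : y = fun m ω => (X m).mulVec (β m) + (Matrix.of (W m ω)).mulVec (θ m) + ε m ω := rfl
  simp only [ey, eH, eH1, eH2, eH3]
  clear_value y H H₁ H₂ H₃
  clear ey eH eH1 eH2 eH3 y H H₁ H₂ H₃
  set Hc : Matrix (Fin n) (Fin n) ℝ := hatMat (fromCols (X 0) (X 1)) with hHc
  set N : Matrix (Fin n) (Fin n) ℝ := 1 - hatMat (X 2) with hNdef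
  -- projection identities
  have hH3X : hatMat (X 2) * X 2 = X 2 := hatMat_mul_self (hXm 2)
  have hHXf : Hc * fromCols (X 0) (X 1) = fromCols (X 0) (X 1) := hatMat_mul_self hX
  rw [Matrix.mul_fromCols] at hHXf
  obtain ⟨hHX0, hHX1⟩ := Matrix.fromCols_inj hHXf
  have hH1X : hatMat (X 0) * X 0 = X 0 := hatMat_mul_self (hXm 0)
  have hH2X : hatMat (X 1) * X 1 = X 1 := hatMat_mul_self (hXm 1)
  have hNsym : Nᵀ = N := by
    rw [hNdef, Matrix.transpose_sub, Matrix.transpose_one, hatMat_transpose]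
  -- the noise parts
  set b : Fin 3 → Ω → Fin n → ℝ := fun m ω => (Matrix.of (W m ω)).mulVec (θ m) + ε m ω with hbdef
  set B : Fin 3 → Matrix (Fin n) (Fin n) ℝ := fun m => N * (hatMat (X m) - Hc) with hBdef
  -- pointwise algebraic identity
  have hdot : ∀ (u : Fin n → ℝ) (M : Matrix (Fin n) (Fin n) ℝ) (c : Fin n → ℝ),
      u ⬝ᵥ M.mulVec c = ∑ i, ∑ j, M i j * (u i * c j) := by
    intro u M c
    simp only [dotProduct, Matrix.mulVec, Finset.mul_sum]
    exact Finset.sum_congr rfl fun i _ => Finset.sum_congr rfl fun j _ => by ring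
  have hkey : ∀ (a c : Fin n → ℝ) (M : Matrix (Fin n) (Fin n) ℝ),
      (N.mulVec a) ⬝ᵥ (M.mulVec c) = a ⬝ᵥ ((N * M).mulVec c) := by
    intro a c M
    rw [Matrix.dotProduct_mulVec, Matrix.dotProduct_mulVec, ← Matrix.vecMul_vecMul]
    congr 1
    rw [← hNsym, Matrix.vecMul_transpose, hNsym]
  have hpoint : ∀ ω,
      (((X 2).mulVec (β 2) + (Matrix.of (W 2 ω)).mulVec (θ 2) + ε 2 ω)
          - (hatMat (X 2)).mulVec ((X 2).mulVec (β 2) + (Matrix.of (W 2 ω)).mulVec (θ 2) + ε 2 ω)) ⬝ᵥ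
        (((hatMat (X 0)).mulVec ((X 0).mulVec (β 0) + (Matrix.of (W 0 ω)).mulVec (θ 0) + ε 0 ω)
          + (hatMat (X 1)).mulVec ((X 1).mulVec (β 1) + (Matrix.of (W 1 ω)).mulVec (θ 1) + ε 1 ω))
          - Hc.mulVec (((X 0).mulVec (β 0) + (Matrix.of (W 0 ω)).mulVec (θ 0) + ε 0 ω)
            + ((X 1).mulVec (β 1) + (Matrix.of (W 1 ω)).mulVec (θ 1) + ε 1 ω)))
      = (∑ i, ∑ j, B 0 i j * (b 2 ω i * b 0 ω j))
        + ∑ i, ∑ j, B 1 i j * (b 2 ω i * b 1 ω j) := by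
    intro ω
    have hleft : ((X 2).mulVec (β 2) + (Matrix.of (W 2 ω)).mulVec (θ 2) + ε 2 ω)
        - (hatMat (X 2)).mulVec ((X 2).mulVec (β 2) + (Matrix.of (W 2 ω)).mulVec (θ 2) + ε 2 ω)
        = N.mulVec (b 2 ω) := by
      rw [hNdef, Matrix.sub_mulVec, Matrix.one_mulVec]
      simp only [hbdef, Matrix.mulVec_add, Matrix.mulVec_mulVec, hH3X]
      abel
    have hright : ((hatMat (X 0)).mulVec ((X 0).mulVec (β 0) + (Matrix.of (W 0 ω)).mulVec (θ 0) + ε 0 ω)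
          + (hatMat (X 1)).mulVec ((X 1).mulVec (β 1) + (Matrix.of (W 1 ω)).mulVec (θ 1) + ε 1 ω))
          - Hc.mulVec (((X 0).mulVec (β 0) + (Matrix.of (W 0 ω)).mulVec (θ 0) + ε 0 ω)
            + ((X 1).mulVec (β 1) + (Matrix.of (W 1 ω)).mulVec (θ 1) + ε 1 ω))
        = (hatMat (X 0) - Hc).mulVec (b 0 ω) + (hatMat (X 1) - Hc).mulVec (b 1 ω) := by
      rw [Matrix.sub_mulVec, Matrix.sub_mulVec]
      simp only [hbdef, Matrix.mulVec_add, Matrix.mulVec_mulVec, hH1X, hH2X, hHX0, hHX1]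
      abel
    rw [hleft, hright, dotProduct_add, hkey, hkey, hdot, hdot]
  simp only [hpoint]
  -- L² and integrability facts
  have hbL2 : ∀ m i, MemLp (fun ω => b m ω i) 2 P := by
    intro m i
    have : (fun ω => b m ω i) = fun ω => (∑ k, θ m k * W m ω i k) + ε m ω i := by
      funext ω; simp [hbdef, Matrix.mulVec, dotProduct, mul_comm]
    rw [this]
    exact (memLp_finset_sum _ fun k _ => (hWL2 m i k).const_mul _).add (hεL2 m i)
  have hprod : ∀ m m' i j, Integrable (fun ω => b m ω i * b m' ω j) P := fun m m' i j =>
    memL2_integrable_mul (hbL2 m i) (hbL2 m' j)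
  -- the key expectation computation
  have hmeasS : ∀ (N' : ℕ) (i : Fin N') (c : Fin p → ℝ),
      Measurable (fun w : Fin N' → Fin p → ℝ => ∑ k, c k * w i k) := fun N' i c => by
    fun_prop
  have hcore : ∀ m : Fin 3, m ≠ 2 → ∀ i j, ∫ ω, b 2 ω i * b m ω j ∂P = Sig 2 m i j := by
    intro m hm i j
    set S2 : Ω → ℝ := fun ω => ∑ k, θ 2 k * W 2 ω i k with hS2def
    set Sm : Ω → ℝ := fun ω => ∑ l, θ m l * W m ω j l with hSmdef
    have hS2L2 : MemLp S2 2 P := memLp_finset_sum _ fun k _ => (hWL2 2 i k).const_mul _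
    have hSmL2 : MemLp Sm 2 P := memLp_finset_sum _ fun l _ => (hWL2 m j l).const_mul _
    have hS2mean : ∫ ω, S2 ω ∂P = 0 := by
      rw [hS2def, integral_finset_sum _ fun k _ => ((hWL2 2 i k).integrable one_le_two).const_mul _]
      simp [integral_const_mul, hWmean]
    have hSmmean : ∫ ω, Sm ω ∂P = 0 := by
      rw [hSmdef, integral_finset_sum _ fun l _ => ((hWL2 m j l).integrable one_le_two).const_mul _]
      simp [integral_const_mul, hWmean]
    -- independences
    have hiS : IndepFun S2 Sm P := by
      have h2m : IndepFun (W 2) (W m) P := hWindep.indepFun (Ne.symm hm)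
      exact h2m.comp (hmeasS n i (θ 2)) (hmeasS n j (θ m))
    have hiS2e : IndepFun S2 (fun ω => ε m ω j) P := by
      have := hWε.comp (φ := fun w : Fin 3 → Fin n → Fin p → ℝ => ∑ k, θ 2 k * w 2 i k)
        (ψ := fun e : Fin 3 → Fin n → ℝ => e m j)
        (by fun_prop) (by fun_prop)
      exact this
    have hieSm : IndepFun (fun ω => ε 2 ω i) Sm P := by
      have := hWε.symm.comp (φ := fun e : Fin 3 → Fin n → ℝ => e 2 i)
        (ψ := fun w : Fin 3 → Fin n → Fin p → ℝ => ∑ l, θ m l * w m j l)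
        (by fun_prop) (by fun_prop)
      exact this
    have hsplit : (fun ω => b 2 ω i * b m ω j)
        = fun ω => S2 ω * Sm ω + S2 ω * ε m ω j + ε 2 ω i * Sm ω + ε 2 ω i * ε m ω j := by
      funext ω
      have hb2 : b 2 ω i = S2 ω + ε 2 ω i := by simp [hbdef, hS2def, Matrix.mulVec, dotProduct, mul_comm]
      have hbm : b m ω j = Sm ω + ε m ω j := by simp [hbdef, hSmdef, Matrix.mulVec, dotProduct, mul_comm]
      rw [hb2, hbm]; ring
    have i1 : Integrable (fun ω => S2 ω * Sm ω) P := memL2_integrable_mul hS2L2 hSmL2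
    have i2 : Integrable (fun ω => S2 ω * ε m ω j) P := memL2_integrable_mul hS2L2 (hεL2 m j)
    have i3 : Integrable (fun ω => ε 2 ω i * Sm ω) P := memL2_integrable_mul (hεL2 2 i) hSmL2
    have i4 : Integrable (fun ω => ε 2 ω i * ε m ω j) P := memL2_integrable_mul (hεL2 2 i) (hεL2 m j)
    have i12 : Integrable (fun ω => S2 ω * Sm ω + S2 ω * ε m ω j) P := i1.add i2
    have i123 : Integrable
        (fun ω => S2 ω * Sm ω + S2 ω * ε m ω j + ε 2 ω i * Sm ω) P := i12.add i3
    rw [hsplit]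
    rw [integral_add i123 i4, integral_add i12 i3, integral_add i1 i2]
    have e1 : ∫ ω, S2 ω * Sm ω ∂P = 0 := by
      have h := hiS.integral_mul_eq_mul_integral hS2L2.aestronglyMeasurable hSmL2.aestronglyMeasurable
      rw [show (∫ ω, S2 ω * Sm ω ∂P) = integral P (S2 * Sm) from rfl, h, hS2mean, zero_mul]
    have e2 : ∫ ω, S2 ω * ε m ω j ∂P = 0 := by
      have h := hiS2e.integral_mul_eq_mul_integral hS2L2.aestronglyMeasurable (hεL2 m j).aestronglyMeasurable
      rw [show (∫ ω, S2 ω * ε m ω j ∂P)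
        = integral P (S2 * fun ω => ε m ω j) from rfl, h, hS2mean, zero_mul]
    have e3 : ∫ ω, ε 2 ω i * Sm ω ∂P = 0 := by
      have h := hieSm.integral_mul_eq_mul_integral (hεL2 2 i).aestronglyMeasurable hSmL2.aestronglyMeasurable
      rw [show (∫ ω, ε 2 ω i * Sm ω ∂P)
        = integral P ((fun ω => ε 2 ω i) * Sm) from rfl, h, hSmmean, mul_zero]
    rw [e1, e2, e3, hcov]
    ring
  -- assemble
  have hpc : ∀ m : Fin 3, m ≠ 2 →
      ∫ ω, ∑ i, ∑ j, B m i j * (b 2 ω i * b m ω j) ∂P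
        = Matrix.trace (B m * Sig m 2) := by
    intro m hm
    erw [integral_finset_sum _ fun i _ =>
      integrable_finset_sum _ fun j _ => (hprod 2 m i j).const_mul _]
    have hstep : ∀ i : Fin n, ∫ ω, ∑ j, B m i j * (b 2 ω i * b m ω j) ∂P
        = ∑ j, B m i j * Sig 2 m i j := by
      intro i
      rw [integral_finset_sum _ fun j _ => (hprod 2 m i j).const_mul _]
      exact Finset.sum_congr rfl fun j _ => by rw [integral_const_mul, hcore m hm i j]
    simp only [hstep]
    have hsym : ∀ i j, Sig 2 m i j = Sig m 2 j i := fun i j => by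
      rw [← hcov 2 m i j, ← hcov m 2 j i]
      exact congrArg (integral P) (funext fun ω => mul_comm _ _)
    simp only [Matrix.trace, Matrix.diag_apply, Matrix.mul_apply]
    exact Finset.sum_congr rfl fun i _ => Finset.sum_congr rfl fun j _ => by rw [hsym]
  erw [integral_add
    (integrable_finset_sum _ fun i _ => integrable_finset_sum _ fun j _ => (hprod 2 0 i j).const_mul _)
    (integrable_finset_sum _ fun i _ => integrable_finset_sum _ fun j _ => (hprod 2 1 i j).const_mul _),
    hpc 0 (by decide), hpc 1 (by decide)]
end

section
/- For m = 1, 2 let β_m, θ_m ∈ ℝᵖ, let W_m : Ω → (real n×p matrices) have rows w_{m,1}, …, w_{m,n} that are mutually independent ℝᵖ-valued random vectors with E[w_{m,i}] = 0 and E[w_{m,i} w_{m,i}ᵀ] = Σ_{W_m}; assume W₁, W₂ are mutually independent and independent of (ε₁, ε₂), where ε₁, ε₂ : Ω → ℝⁿ are square-integrable with E[ε_m] = 0 and E[ε_m ε_{m'}ᵀ] = Σ_{mm'}. With y_m = X_m β_m + W_m θ_m + ε_m, y = y₁ + y₂, ŷ = H y, ŷ* = H₁ y₁ + H₂ y₂,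 one has E[‖y − ŷ‖²] − E[‖y − ŷ*‖²] = Tr{(H₁ − H)Σ₁₁} + Tr{(H₂ − H)Σ₂₂} + 2Tr{(H₁ + H₂ − H)Σ₁₂} − 2Tr{H₂H₁Σ₁₂} − p·θ₁ᵀΣ_{W₁}θ₁ − p·θ₂ᵀΣ_{W₂}θ₂. -/
open Matrix MeasureTheory ProbabilityTheory
open scoped BigOperators

section Hat
variable {n : ℕ} {q : Type*} [Fintype q] [DecidableEq q] (A : Matrix (Fin n) q ℝ)

lemma hat_transpose : (hatMat A)ᵀ = hatMat A := by
  simp only [hatMat, Matrix.transpose_mul, Matrix.transpose_transpose,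
    Matrix.transpose_nonsing_inv]
  rw [Matrix.mul_assoc]

lemma hat_mul_self (h : IsUnit (Aᵀ * A)) : hatMat A * A = A := by
  have hd : IsUnit (Aᵀ * A).det := (Matrix.isUnit_iff_isUnit_det _).mp h
  calc hatMat A * A = A * ((Aᵀ * A)⁻¹ * (Aᵀ * A)) := by simp [hatMat, Matrix.mul_assoc]
    _ = A := by rw [Matrix.nonsing_inv_mul _ hd, Matrix.mul_one]

lemma hat_idem (h : IsUnit (Aᵀ * A)) : hatMat A * hatMat A = hatMat A := by
  calc hatMat A * hatMat A = (hatMat A * A) * ((Aᵀ * A)⁻¹ * Aᵀ) := by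
        simp [hatMat, Matrix.mul_assoc]
    _ = hatMat A := by rw [hat_mul_self A h, hatMat, Matrix.mul_assoc]

lemma trace_hat (h : IsUnit (Aᵀ * A)) : (hatMat A).trace = Fintype.card q := by
  have hd : IsUnit (Aᵀ * A).det := (Matrix.isUnit_iff_isUnit_det _).mp h
  rw [hatMat, Matrix.mul_assoc, Matrix.trace_mul_comm, Matrix.mul_assoc,
    Matrix.nonsing_inv_mul _ hd, Matrix.trace_one]
end Hat

section Helpers
variable {Ω : Type*} [MeasurableSpace Ω] {P : Measure Ω} [IsProbabilityMeasure P] {p : ℕ}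

lemma l2_mul' {f g : Ω → ℝ} (hf : MemLp f 2 P) (hg : MemLp g 2 P) :
    Integrable (fun ω => f ω * g ω) P := by
  have h : MemLp (g • f) 1 P := hf.smul hg
  have := memLp_one_iff_integrable.mp h
  exact (by simpa [Pi.smul_apply, smul_eq_mul, mul_comm] using this : Integrable (f * g) P)

lemma rowdot_L2 (x : Ω → Fin p → ℝ) (θ : Fin p → ℝ) (h : ∀ c, MemLp (fun ω => x ω c) 2 P) :
    MemLp (fun ω => ∑ c, x ω c * θ c) 2 P := by
  apply memLp_finset_sum (f := fun c ω => x ω c * θ c)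
  intro c _
  have : (fun ω => x ω c * θ c) = fun ω => θ c * x ω c := by funext ω; ring
  rw [this]
  exact (h c).const_mul _

lemma rowdot_mean (x : Ω → Fin p → ℝ) (θ : Fin p → ℝ)
    (hL2 : ∀ c, MemLp (fun ω => x ω c) 2 P) (h0 : ∀ c, ∫ ω, x ω c ∂P = 0) :
    ∫ ω, ∑ c, x ω c * θ c ∂P = 0 := by
  rw [integral_finset_sum _ (fun c _ => ((hL2 c).integrable one_le_two).mul_const _)]
  simp [integral_mul_const, h0]

lemma rowdot_sq (x : Ω → Fin p → ℝ) (θ : Fin p → ℝ) (S : Matrix (Fin p) (Fin p) ℝ)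
    (hL2 : ∀ c, MemLp (fun ω => x ω c) 2 P)
    (hcov : ∀ c d, ∫ ω, x ω c * x ω d ∂P = S c d) :
    ∫ ω, (∑ c, x ω c * θ c) * (∑ d, x ω d * θ d) ∂P = θ ⬝ᵥ S.mulVec θ := by
  have h1 : ∀ ω, (∑ c, x ω c * θ c) * (∑ d, x ω d * θ d)
      = ∑ c, ∑ d, (x ω c * x ω d) * (θ c * θ d) := by
    intro ω
    rw [Finset.sum_mul_sum]
    exact Finset.sum_congr rfl fun c _ => Finset.sum_congr rfl fun d _ => by ring
  simp only [h1]
  rw [integral_finset_sum _ (fun c _ => integrable_finset_sum _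
    (fun d _ => (l2_mul' (hL2 c) (hL2 d)).mul_const _))]
  have h2 : ∀ c, (∫ ω, ∑ d, (x ω c * x ω d) * (θ c * θ d) ∂P)
      = ∑ d, (S c d) * (θ c * θ d) := by
    intro c
    rw [integral_finset_sum _ (fun d _ => (l2_mul' (hL2 c) (hL2 d)).mul_const _)]
    refine Finset.sum_congr rfl fun d _ => ?_
    rw [integral_mul_const, hcov]
  simp only [h2, dotProduct, Matrix.mulVec, Finset.mul_sum]
  exact Finset.sum_congr rfl fun c _ => Finset.sum_congr rfl fun d _ => by ring

lemma indep_mul_zero {f g : Ω → ℝ} (h : IndepFun f g P) (hf : AEStronglyMeasurable f P)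
    (hg : AEStronglyMeasurable g P) (h0 : ∫ ω, f ω ∂P = 0) :
    ∫ ω, f ω * g ω ∂P = 0 := by
  rw [h.integral_fun_mul_eq_mul_integral hf hg, h0, zero_mul]

/-- second moment matrix -/
noncomputable def Cov {n : ℕ} (P : Measure Ω) (f g : Ω → Fin n → ℝ) :
    Matrix (Fin n) (Fin n) ℝ :=
  Matrix.of fun a b => ∫ ω, f ω a * g ω b ∂P

lemma dot_sum {n : ℕ} (A B : Matrix (Fin n) (Fin n) ℝ) (x z : Fin n → ℝ) :
    (A.mulVec x) ⬝ᵥ (B.mulVec z)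
      = ∑ a, ∑ b, (∑ i, A i a * B i b) * (x a * z b) := by
  calc (A.mulVec x) ⬝ᵥ (B.mulVec z)
      = ∑ i, ∑ a, ∑ b, (A i a * x a) * (B i b * z b) := by
        simp only [dotProduct, mulVec, Finset.sum_mul_sum]
    _ = ∑ a, ∑ i, ∑ b, (A i a * x a) * (B i b * z b) := Finset.sum_comm
    _ = ∑ a, ∑ b, ∑ i, (A i a * x a) * (B i b * z b) :=
        Finset.sum_congr rfl fun a _ => Finset.sum_comm
    _ = ∑ a, ∑ b, (∑ i, A i a * B i b) * (x a * z b) := by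
        refine Finset.sum_congr rfl fun a _ => Finset.sum_congr rfl fun b _ => ?_
        rw [Finset.sum_mul]
        exact Finset.sum_congr rfl fun i _ => by ring

lemma integrable_dot {n : ℕ} (A B : Matrix (Fin n) (Fin n) ℝ) (f g : Ω → Fin n → ℝ)
    (h : ∀ a b, Integrable (fun ω => f ω a * g ω b) P) :
    Integrable (fun ω => (A.mulVec (f ω)) ⬝ᵥ (B.mulVec (g ω))) P := by
  simp only [dot_sum]
  exact integrable_finset_sum _ fun a _ => integrable_finset_sum _ fun b _ => (h a b).const_mul _

lemma integral_dot {n : ℕ} (A B : Matrix (Fin n) (Fin n) ℝ) (f g : Ω → Fin n → ℝ)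
    (h : ∀ a b, Integrable (fun ω => f ω a * g ω b) P) :
    ∫ ω, (A.mulVec (f ω)) ⬝ᵥ (B.mulVec (g ω)) ∂P
      = Matrix.trace (Aᵀ * B * (Cov P f g)ᵀ) := by
  simp only [dot_sum]
  rw [integral_finset_sum _ (fun a _ => integrable_finset_sum _ fun b _ => (h a b).const_mul _)]
  have : ∀ a, (∫ ω, ∑ b, (∑ i, A i a * B i b) * (f ω a * g ω b) ∂P)
      = ∑ b, (∑ i, A i a * B i b) * ∫ ω, f ω a * g ω b ∂P := by
    intro a
    rw [integral_finset_sum _ (fun b _ => (h a b).const_mul _)]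
    exact Finset.sum_congr rfl fun b _ => integral_const_mul _ _
  simp only [this]
  simp only [Cov, Matrix.trace, Matrix.diag, Matrix.mul_apply, Matrix.transpose_apply,
    Matrix.of_apply, Finset.sum_mul]

lemma integral_dot_pair {n : ℕ} (A B : Matrix (Fin n) (Fin n) ℝ) (f g : Ω → Fin n → ℝ)
    (hff : ∀ a b, Integrable (fun ω => f ω a * f ω b) P)
    (hfg : ∀ a b, Integrable (fun ω => f ω a * g ω b) P)
    (hgf : ∀ a b, Integrable (fun ω => g ω a * f ω b) P)
    (hgg : ∀ a b, Integrable (fun ω => g ω a * g ω b) P) :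
    ∫ ω, (A.mulVec (f ω) + B.mulVec (g ω)) ⬝ᵥ (A.mulVec (f ω) + B.mulVec (g ω)) ∂P
      = ((Aᵀ * A * (Cov P f f)ᵀ).trace + (Aᵀ * B * (Cov P f g)ᵀ).trace)
        + ((Bᵀ * A * (Cov P g f)ᵀ).trace + (Bᵀ * B * (Cov P g g)ᵀ).trace) := by
  have h1 : ∀ ω : Ω, (A.mulVec (f ω) + B.mulVec (g ω)) ⬝ᵥ (A.mulVec (f ω) + B.mulVec (g ω))
      = ((A.mulVec (f ω)) ⬝ᵥ (A.mulVec (f ω)) + (A.mulVec (f ω)) ⬝ᵥ (B.mulVec (g ω)))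
        + ((B.mulVec (g ω)) ⬝ᵥ (A.mulVec (f ω)) + (B.mulVec (g ω)) ⬝ᵥ (B.mulVec (g ω))) := by
    intro ω
    simp only [add_dotProduct, dotProduct_add]
    ring
  simp only [h1]
  have i1 : Integrable (fun ω => (A.mulVec (f ω)) ⬝ᵥ (A.mulVec (f ω))
      + (A.mulVec (f ω)) ⬝ᵥ (B.mulVec (g ω))) P :=
    (integrable_dot A A f f hff).add (integrable_dot A B f g hfg)
  have i2 : Integrable (fun ω => (B.mulVec (g ω)) ⬝ᵥ (A.mulVec (f ω))
      + (B.mulVec (g ω)) ⬝ᵥ (B.mulVec (g ω))) P :=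
    (integrable_dot B A g f hgf).add (integrable_dot B B g g hgg)
  rw [integral_add i1 i2,
    integral_add (integrable_dot A A f f hff) (integrable_dot A B f g hfg),
    integral_add (integrable_dot B A g f hgf) (integrable_dot B B g g hgg),
    integral_dot A A f f hff, integral_dot A B f g hfg, integral_dot B A g f hgf,
    integral_dot B B g g hgg]

lemma trace_mul_transpose {n : ℕ} (A B : Matrix (Fin n) (Fin n) ℝ) :
    (A * Bᵀ).trace = (Aᵀ * B).trace := by
  rw [← Matrix.trace_transpose (A * Bᵀ), Matrix.transpose_mul, Matrix.transpose_transpose,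
    Matrix.trace_mul_comm]

end Helpers

/-- **Proposition 2.** The expected difference in training error between AVR and IR. -/
theorem training_error_difference_expectation {n p : ℕ}
    {Ω : Type*} [MeasurableSpace Ω] (P : Measure Ω) [IsProbabilityMeasure P]
    (X : Fin 2 → Matrix (Fin n) (Fin p) ℝ)
    (hXm : ∀ m, IsUnit ((X m)ᵀ * X m))
    (hX : IsUnit ((fromCols (X 0) (X 1))ᵀ * fromCols (X 0) (X 1)))
    (β θ : Fin 2 → Fin p → ℝ)
    (W : Fin 2 → Ω → Fin n → Fin p → ℝ)
    (ε : Fin 2 → Ω → Fin n → ℝ)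
    (Sig : Fin 2 → Fin 2 → Matrix (Fin n) (Fin n) ℝ)
    (SigW : Fin 2 → Matrix (Fin p) (Fin p) ℝ)
    (hWL2 : ∀ m i j, MemLp (fun ω => W m ω i j) 2 P)
    (hWrowIndep : ∀ m, iIndepFun
      (fun i : Fin n => fun ω => W m ω i) P)
    (hWmean : ∀ m i j, ∫ ω, W m ω i j ∂P = 0)
    (hWrowCov : ∀ m i a b, ∫ ω, W m ω i a * W m ω i b ∂P = SigW m a b)
    (hWindep : iIndepFun W P)
    (hWε : IndepFun (fun ω => fun m => W m ω) (fun ω => fun m => ε m ω) P)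
    (hεL2 : ∀ m i, MemLp (fun ω => ε m ω i) 2 P)
    (hεmean : ∀ m i, ∫ ω, ε m ω i ∂P = 0)
    (hcov : ∀ m m' i j, ∫ ω, ε m ω i * ε m' ω j ∂P = Sig m m' i j) :
    let y : Fin 2 → Ω → Fin n → ℝ :=
      fun m ω => (X m).mulVec (β m) + (Matrix.of (W m ω)).mulVec (θ m) + ε m ω
    let H := hatMat (fromCols (X 0) (X 1))
    let H₁ := hatMat (X 0)
    let H₂ := hatMat (X 1)
    let yhat : Ω → Fin n → ℝ := fun ω => H.mulVec (y 0 ω + y 1 ω)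
    let yhatStar : Ω → Fin n → ℝ := fun ω => H₁.mulVec (y 0 ω) + H₂.mulVec (y 1 ω)
    (∫ ω, ((y 0 ω + y 1 ω) - yhat ω) ⬝ᵥ ((y 0 ω + y 1 ω) - yhat ω) ∂P)
      - (∫ ω, ((y 0 ω + y 1 ω) - yhatStar ω) ⬝ᵥ ((y 0 ω + y 1 ω) - yhatStar ω) ∂P)
      = Matrix.trace ((H₁ - H) * Sig 0 0) + Matrix.trace ((H₂ - H) * Sig 1 1)
        + 2 * Matrix.trace ((H₁ + H₂ - H) * Sig 0 1)
        - 2 * Matrix.trace (H₂ * H₁ * Sig 0 1)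
        - (p : ℝ) * (θ 0 ⬝ᵥ (SigW 0).mulVec (θ 0))
        - (p : ℝ) * (θ 1 ⬝ᵥ (SigW 1).mulVec (θ 1)) := by
  intro y H H₁ H₂ yhat yhatStar
  -- abbreviations
  set u : Fin 2 → Ω → Fin n → ℝ := fun m ω a => ∑ c, W m ω a c * θ m c with hudef
  set z : Fin 2 → Ω → Fin n → ℝ := fun m ω a => u m ω a + ε m ω a with hzdef
  set σ : Fin 2 → ℝ := fun m => θ m ⬝ᵥ (SigW m).mulVec (θ m) with hσdef
  -- L2 and basic integrability
  have huL2 : ∀ m a, MemLp (fun ω => u m ω a) 2 P := by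
    intro m a
    exact rowdot_L2 (fun ω => W m ω a) (θ m) (fun c => hWL2 m a c)
  have hzL2 : ∀ m a, MemLp (fun ω => z m ω a) 2 P := by
    intro m a
    exact (huL2 m a).add (hεL2 m a)
  have huMean : ∀ m a, ∫ ω, u m ω a ∂P = 0 := by
    intro m a
    exact rowdot_mean (fun ω => W m ω a) (θ m) (fun c => hWL2 m a c) (fun c => hWmean m a c)
  -- vanishing cross moments
  have huε : ∀ m m' a b, ∫ ω, u m ω a * ε m' ω b ∂P = 0 := by
    intro m m' a b
    refine indep_mul_zero ?_ (huL2 m a).aestronglyMeasurable (hεL2 m' b).aestronglyMeasurable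
      (huMean m a)
    exact hWε.comp
      (φ := fun x : Fin 2 → Fin n → Fin p → ℝ => ∑ c, x m a c * θ m c)
      (ψ := fun x : Fin 2 → Fin n → ℝ => x m' b) (by fun_prop) (by fun_prop)
  have hεu : ∀ m m' a b, ∫ ω, ε m ω a * u m' ω b ∂P = 0 := by
    intro m m' a b
    have : (fun ω => ε m ω a * u m' ω b) = fun ω => u m' ω b * ε m ω a := by
      funext ω; ring
    rw [this, huε]
  have huu : ∀ m m' a b, ∫ ω, u m ω a * u m' ω b ∂P
      = if m = m' then (if a = b then σ m else 0) else 0 := by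
    intro m m' a b
    by_cases hmm : m = m'
    · subst hmm
      by_cases hab : a = b
      · subst hab
        simp only [if_pos rfl]
        exact rowdot_sq (fun ω => W m ω a) (θ m) (SigW m) (fun c => hWL2 m a c)
          (fun c d => hWrowCov m a c d)
      · simp only [if_pos rfl, if_neg hab]
        refine indep_mul_zero ?_ (huL2 m a).aestronglyMeasurable
          (huL2 m b).aestronglyMeasurable (huMean m a)
        exact ((hWrowIndep m).indepFun hab).comp
          (φ := fun x : Fin p → ℝ => ∑ c, x c * θ m c)
          (ψ := fun x : Fin p → ℝ => ∑ c, x c * θ m c) (by fun_prop) (by fun_prop)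
    · simp only [if_neg hmm]
      refine indep_mul_zero ?_ (huL2 m a).aestronglyMeasurable
        (huL2 m' b).aestronglyMeasurable (huMean m a)
      exact (hWindep.indepFun hmm).comp
        (φ := fun x : Fin n → Fin p → ℝ => ∑ c, x a c * θ m c)
        (ψ := fun x : Fin n → Fin p → ℝ => ∑ c, x b c * θ m' c) (by fun_prop) (by fun_prop)
  -- entries of the second-moment matrices
  have hzz : ∀ m m' a b, ∫ ω, z m ω a * z m' ω b ∂P
      = (if m = m' then (if a = b then σ m else 0) else 0) + Sig m m' a b := by
    intro m m' a b
    have hexp : (fun ω => z m ω a * z m' ω b)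
        = fun ω => u m ω a * u m' ω b + (u m ω a * ε m' ω b
            + (ε m ω a * u m' ω b + ε m ω a * ε m' ω b)) := by
      funext ω
      simp only [hzdef]
      ring
    rw [hexp]
    have i1 : Integrable (fun ω => u m ω a * u m' ω b) P :=
      l2_mul' (huL2 m a) (huL2 m' b)
    have i2 : Integrable (fun ω => u m ω a * ε m' ω b) P :=
      l2_mul' (huL2 m a) (hεL2 m' b)
    have i3 : Integrable (fun ω => ε m ω a * u m' ω b) P :=
      l2_mul' (hεL2 m a) (huL2 m' b)
    have i4 : Integrable (fun ω => ε m ω a * ε m' ω b) P :=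
      l2_mul' (hεL2 m a) (hεL2 m' b)
    have i34 : Integrable (fun ω => ε m ω a * u m' ω b + ε m ω a * ε m' ω b) P := i3.add i4
    have i234 : Integrable (fun ω => u m ω a * ε m' ω b
        + (ε m ω a * u m' ω b + ε m ω a * ε m' ω b)) P := i2.add i34
    rw [integral_add i1 i234, integral_add i2 i34,
      integral_add i3 i4, huu, huε, hεu, hcov]
    ring
  have hCovM : ∀ m m', Cov P (z m) (z m')
      = (if m = m' then σ m • (1 : Matrix (Fin n) (Fin n) ℝ) else 0) + Sig m m' := by
    intro m m'
    ext a b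
    simp only [Cov, Matrix.of_apply, hzz, Matrix.add_apply]
    congr 1
    split_ifs with h1 h2 <;>
      simp [Matrix.smul_apply, Matrix.one_apply, *]
  -- hat matrix facts
  have hH : H = hatMat (fromCols (X 0) (X 1)) := rfl
  have hH1 : H₁ = hatMat (X 0) := rfl
  have hH2 : H₂ = hatMat (X 1) := rfl
  have hHsym : Hᵀ = H := hat_transpose _
  have hH1sym : H₁ᵀ = H₁ := hat_transpose _
  have hH2sym : H₂ᵀ = H₂ := hat_transpose _
  have hHidem : H * H = H := hat_idem _ hX
  have hH1idem : H₁ * H₁ = H₁ := hat_idem _ (hXm 0)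
  have hH2idem : H₂ * H₂ = H₂ := hat_idem _ (hXm 1)
  have hHX0 : H * X 0 = X 0 := by
    have h2 : hatMat (fromCols (X 0) (X 1)) * (fromCols (X 0) (X 1)
          * fromRows (1 : Matrix (Fin p) (Fin p) ℝ) (0 : Matrix (Fin p) (Fin p) ℝ))
        = fromCols (X 0) (X 1)
          * fromRows (1 : Matrix (Fin p) (Fin p) ℝ) (0 : Matrix (Fin p) (Fin p) ℝ) := by
      rw [← Matrix.mul_assoc, hat_mul_self _ hX]
    simpa [fromCols_mul_fromRows] using h2
  have hHX1 : H * X 1 = X 1 := by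
    have h2 : hatMat (fromCols (X 0) (X 1)) * (fromCols (X 0) (X 1)
          * fromRows (0 : Matrix (Fin p) (Fin p) ℝ) (1 : Matrix (Fin p) (Fin p) ℝ))
        = fromCols (X 0) (X 1)
          * fromRows (0 : Matrix (Fin p) (Fin p) ℝ) (1 : Matrix (Fin p) (Fin p) ℝ) := by
      rw [← Matrix.mul_assoc, hat_mul_self _ hX]
    simpa [fromCols_mul_fromRows] using h2
  have hH1X : H₁ * X 0 = X 0 := hat_mul_self _ (hXm 0)
  have hH2X : H₂ * X 1 = X 1 := hat_mul_self _ (hXm 1)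
  -- traces of hat matrices
  have htrH : H.trace = 2 * (p : ℝ) := by
    rw [hH, trace_hat _ hX]
    simp [Fintype.card_sum]
    push_cast
    ring
  have htrH1 : H₁.trace = (p : ℝ) := by
    rw [hH1, trace_hat _ (hXm 0)]
    simp
  have htrH2 : H₂.trace = (p : ℝ) := by
    rw [hH2, trace_hat _ (hXm 1)]
    simp
  -- residual identities
  have hyz : ∀ m ω, y m ω = (X m).mulVec (β m) + z m ω := by
    intro m ω
    funext i
    simp only [y, hzdef, hudef, Pi.add_apply, Matrix.mulVec, dotProduct, Matrix.of_apply]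
    ring
  have key1 : ∀ ω, (y 0 ω + y 1 ω) - yhat ω
      = (1 - H).mulVec (z 0 ω) + (1 - H).mulVec (z 1 ω) := by
    intro ω
    have e1 : y 0 ω + y 1 ω
        = ((X 0).mulVec (β 0) + (X 1).mulVec (β 1)) + (z 0 ω + z 1 ω) := by
      rw [hyz 0 ω, hyz 1 ω]
      abel
    have e2 : yhat ω = ((X 0).mulVec (β 0) + (X 1).mulVec (β 1))
        + (H.mulVec (z 0 ω) + H.mulVec (z 1 ω)) := by
      show H.mulVec (y 0 ω + y 1 ω) = _
      rw [e1, Matrix.mulVec_add, Matrix.mulVec_add, Matrix.mulVec_add,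
        Matrix.mulVec_mulVec, Matrix.mulVec_mulVec, hHX0, hHX1]
    rw [e1, e2]
    simp only [Matrix.sub_mulVec, Matrix.one_mulVec]
    abel
  have key2 : ∀ ω, (y 0 ω + y 1 ω) - yhatStar ω
      = (1 - H₁).mulVec (z 0 ω) + (1 - H₂).mulVec (z 1 ω) := by
    intro ω
    have e0 : yhatStar ω = ((X 0).mulVec (β 0) + H₁.mulVec (z 0 ω))
        + ((X 1).mulVec (β 1) + H₂.mulVec (z 1 ω)) := by
      show H₁.mulVec (y 0 ω) + H₂.mulVec (y 1 ω) = _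
      rw [hyz 0 ω, hyz 1 ω, Matrix.mulVec_add, Matrix.mulVec_add,
        Matrix.mulVec_mulVec, Matrix.mulVec_mulVec, hH1X, hH2X]
    rw [hyz 0 ω, hyz 1 ω, e0]
    simp only [Matrix.sub_mulVec, Matrix.one_mulVec]
    abel
  -- integrability of pairwise products
  have hint : ∀ m m' a b, Integrable (fun ω => z m ω a * z m' ω b) P :=
    fun m m' a b => l2_mul' (hzL2 m a) (hzL2 m' b)
  -- specialize the covariance matrices
  have hc00 : Cov P (z 0) (z 0) = σ 0 • 1 + Sig 0 0 := by simpa using hCovM 0 0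
  have hc01 : Cov P (z 0) (z 1) = Sig 0 1 := by simpa using hCovM 0 1
  have hc10 : Cov P (z 1) (z 0) = Sig 1 0 := by simpa using hCovM 1 0
  have hc11 : Cov P (z 1) (z 1) = σ 1 • 1 + Sig 1 1 := by simpa using hCovM 1 1
  -- symmetry of the covariance matrices
  have hSigT : ∀ m m', (Sig m m')ᵀ = Sig m' m := by
    intro m m'
    ext i j
    rw [Matrix.transpose_apply, ← hcov m m' j i, ← hcov m' m i j]
    congr 1
    funext ω
    ring
  have hS00T : (Sig 0 0)ᵀ = Sig 0 0 := hSigT 0 0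
  have hS11T : (Sig 1 1)ᵀ = Sig 1 1 := hSigT 1 1
  have hS10 : Sig 1 0 = (Sig 0 1)ᵀ := (hSigT 0 1).symm
  -- idempotency products
  have sq : ∀ A : Matrix (Fin n) (Fin n) ℝ, A * A = A → (1 - A) * (1 - A) = 1 - A := by
    intro A hA
    rw [Matrix.sub_mul, Matrix.mul_sub, Matrix.mul_sub, Matrix.one_mul, Matrix.mul_one, hA]
    simp only [Matrix.one_mul]
    abel
  have tsub : ∀ A : Matrix (Fin n) (Fin n) ℝ, Aᵀ = A → (1 - A)ᵀ = 1 - A := by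
    intro A hA
    rw [Matrix.transpose_sub, Matrix.transpose_one, hA]
  have q1 : (1 - H)ᵀ * (1 - H) = 1 - H := by rw [tsub _ hHsym, sq _ hHidem]
  have q2 : (1 - H₁)ᵀ * (1 - H₁) = 1 - H₁ := by rw [tsub _ hH1sym, sq _ hH1idem]
  have q3 : (1 - H₂)ᵀ * (1 - H₂) = 1 - H₂ := by rw [tsub _ hH2sym, sq _ hH2idem]
  have q5 : (1 - H₂)ᵀ * (1 - H₁) = (1 - H₂) * (1 - H₁) := by rw [tsub _ hH2sym]
  -- rewrite the two integrals
  simp only [key1, key2]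
  rw [integral_dot_pair (1 - H) (1 - H) (z 0) (z 1)
      (hint 0 0) (hint 0 1) (hint 1 0) (hint 1 1),
    integral_dot_pair (1 - H₁) (1 - H₂) (z 0) (z 1)
      (hint 0 0) (hint 0 1) (hint 1 0) (hint 1 1)]
  rw [hc00, hc01, hc10, hc11, hS10]
  simp only [Matrix.transpose_add, Matrix.transpose_smul, Matrix.transpose_one, hS00T, hS11T,
    Matrix.transpose_transpose]
  rw [trace_mul_transpose ((1 - H)ᵀ * (1 - H)) (Sig 0 1),
    trace_mul_transpose ((1 - H₁)ᵀ * (1 - H₂)) (Sig 0 1)]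
  simp only [Matrix.transpose_mul, Matrix.transpose_transpose]
  rw [q1, q2, q3]
  simp only [q5]
  -- expand all traces
  simp only [Matrix.mul_add, Matrix.add_mul, Matrix.sub_mul, Matrix.mul_sub, Matrix.one_mul,
    Matrix.mul_one, Matrix.mul_smul, Matrix.smul_mul, Matrix.trace_add, Matrix.trace_sub,
    Matrix.trace_smul, smul_eq_mul, Matrix.mul_assoc]
  rw [htrH, htrH1, htrH2]
  simp only [Matrix.trace_one, Fintype.card_fin]
  push_cast
  ring
end
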